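/- Let S be an m × N real matrix, A a K × N real matrix, b ∈ ℝ^K, c ∈ ℝ^N, M = {v ∈ ℝ^N | S v = 0, A v ≤ b}, and let M_opt = {v ∈ M | ∀ w ∈ M, cᵀ w ≤ cᵀ v} be the set of optimal solutions, assumed nonempty. Let L_opt be the affine span of M_opt, d_opt its dimension, and μ_opt the d_opt-dimensional Hausdorff measure restricted to L_opt. Let n₀^opt = #{i ∈ {1,…,N} | v_i = 0 for all v ∈ M_opt}. Then for μ_opt-almost every v ∈ M_opt, the number of nonzero coordinates of v equals N − n₀^opt. -/

import Mathlib

open MeasureTheory Matrix Set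
open scoped ENNReal NNReal

-- auxiliary: a set contained in a translate of a submodule of finrank < d has μH[d] zero
lemma aux_haus_zero {N : ℕ} (W : Submodule ℝ (EuclideanSpace ℝ (Fin N)))
    (x₀ : EuclideanSpace ℝ (Fin N)) (T : Set (EuclideanSpace ℝ (Fin N)))
    (hT : T ⊆ (fun w : W => x₀ + (w : EuclideanSpace ℝ (Fin N))) '' Set.univ)
    (d : ℕ) (hlt : Module.finrank ℝ W < d) :
    μH[(d : ℝ)] T = 0 := by
  have hiso : Isometry (fun w : W => x₀ + (w : EuclideanSpace ℝ (Fin N))) :=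
    Isometry.of_dist_eq (fun w₁ w₂ => by
      simp [dist_eq_norm])
  have hdim : dimH T ≤ (Module.finrank ℝ W : ℝ≥0∞) := by
    calc dimH T ≤ dimH ((fun w : W => x₀ + (w : EuclideanSpace ℝ (Fin N))) '' Set.univ) :=
          dimH_mono hT
      _ = dimH (Set.univ : Set W) := hiso.dimH_image _
      _ = (Module.finrank ℝ W : ℝ≥0∞) := Real.dimH_univ_eq_finrank W
  have : dimH T < ((d : ℝ≥0) : ℝ≥0∞) := by
    refine lt_of_le_of_lt hdim ?_
    exact_mod_cast Nat.cast_lt.mpr hlt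
  have h0 := hausdorffMeasure_of_dimH_lt this
  exact_mod_cast h0


/-- Let `M_opt` be the (nonempty) optimal solution set of the linear
program `maximize cᵀ v` over `M = {v | S v = 0, A v ≤ b}`, and let `μ` be the natural
Lebesgue measure on `M_opt`, namely the Hausdorff measure of dimension `d_opt` (the
dimension of the affine span of `M_opt`) restricted to that affine span. With
`n₀ = #{i | vᵢ = 0 for all v ∈ M_opt}`, almost every `v ∈ M_opt` has exactly `N − n₀`
nonzero coordinates. -/
theorem stmt8 (m N K : ℕ) (S : Matrix (Fin m) (Fin N) ℝ)
    (A : Matrix (Fin K) (Fin N) ℝ) (b : Fin K → ℝ) (c : Fin N → ℝ)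
    (M : Set (EuclideanSpace ℝ (Fin N)))
    (hM : M = {v | S.mulVec v.ofLp = 0 ∧ A.mulVec v.ofLp ≤ b})
    (Mopt : Set (EuclideanSpace ℝ (Fin N)))
    (hMopt : Mopt = {v ∈ M | ∀ w ∈ M, c ⬝ᵥ w ≤ c ⬝ᵥ v})
    (hne : Mopt.Nonempty)
    (Lopt : AffineSubspace ℝ (EuclideanSpace ℝ (Fin N))) (hL : Lopt = affineSpan ℝ Mopt)
    (dopt : ℕ) (hd : dopt = Module.finrank ℝ Lopt.direction)
    (μ : Measure (EuclideanSpace ℝ (Fin N)))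
    (hμ : μ = (μH[dopt]).restrict (Lopt : Set (EuclideanSpace ℝ (Fin N))))
    (n₀ : ℕ) (hn₀ : n₀ = {i : Fin N | ∀ v ∈ Mopt, v i = 0}.ncard) :
    ∀ᵐ v ∂μ, v ∈ Mopt → {i : Fin N | v i ≠ 0}.ncard = N - n₀ := by
  let E := EuclideanSpace ℝ (Fin N)
  set Z : Set (Fin N) := {i : Fin N | ∀ v ∈ Mopt, v i = 0} with hZ
  -- key: for each i ∉ Z, {v | v i = 0} is μ-null
  have key : ∀ i : Fin N, i ∉ Z → μ {v : E | v i = 0} = 0 := by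
    intro i hi
    simp only [hZ, Set.mem_setOf_eq, not_forall] at hi
    obtain ⟨p, hp, hpi⟩ := hi
    have hpL : p ∈ Lopt := hL ▸ subset_affineSpan ℝ Mopt hp
    have hmeas : MeasurableSet {v : E | v i = 0} := by
      have : Continuous (fun v : E => v i) := by
        exact (EuclideanSpace.proj i).continuous
      exact (isClosed_eq this continuous_const).measurableSet
    rw [hμ, Measure.restrict_apply hmeas]
    set T : Set E := {v : E | v i = 0} ∩ (Lopt : Set E) with hTdef
    rcases Set.eq_empty_or_nonempty T with hTe | ⟨x₀, hx₀⟩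
    · simp [hTe]
    · obtain ⟨hx₀i, hx₀L⟩ := hx₀
      set W : Submodule ℝ E := Lopt.direction ⊓ LinearMap.ker ((EuclideanSpace.proj i : E →L[ℝ] ℝ) : E →ₗ[ℝ] ℝ) with hW
      have hTsub : T ⊆ (fun w : W => x₀ + (w : E)) '' Set.univ := by
        rintro x ⟨hxi, hxL⟩
        refine ⟨⟨x - x₀, ?_, ?_⟩, Set.mem_univ _, by simp⟩
        · exact AffineSubspace.vsub_mem_direction hxL hx₀L
        · show x i - x₀ i = 0
          rw [Set.mem_setOf_eq] at hxi hx₀i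
          rw [hxi, hx₀i, sub_zero]
      have hlt : Module.finrank ℝ W < dopt := by
        rw [hd]
        apply Submodule.finrank_lt_finrank_of_lt
        refine lt_of_le_of_ne inf_le_left ?_
        intro hWeq
        have hu : p - x₀ ∈ Lopt.direction := AffineSubspace.vsub_mem_direction hpL hx₀L
        rw [← hWeq] at hu
        have := hu.2
        have : p i - x₀ i = 0 := this
        rw [Set.mem_setOf_eq] at hx₀i
        rw [hx₀i, sub_zero] at this
        exact hpi this
      exact aux_haus_zero W x₀ T hTsub dopt hlt
  have hae : ∀ᵐ v ∂μ, ∀ i : Fin N, i ∉ Z → v i ≠ 0 := by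
    rw [MeasureTheory.ae_all_iff]
    intro i
    by_cases hi : i ∈ Z
    · filter_upwards with v h; exact absurd hi h
    · have := key i hi
      have : ∀ᵐ v ∂μ, v i ≠ 0 := by
        rw [MeasureTheory.ae_iff]
        convert this using 2
        ext v; simp; exact Iff.rfl
      filter_upwards [this] with v hv _; exact hv
  filter_upwards [hae] with v hv hvM
  have hset : {i : Fin N | v i ≠ 0} = Zᶜ := by
    ext i
    simp only [Set.mem_setOf_eq, Set.mem_compl_iff]
    constructor
    · intro hne0 hiZ; exact hne0 (hiZ v hvM)
    · exact hv i
  rw [hset]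
  have hcard := Set.ncard_add_ncard_compl Z
  rw [hn₀]
  have : Nat.card (Fin N) = N := by simp
  omega
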